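/- Let n ≥ 1 and ℓ ≥ 3 be integers, and let z₁,...,zₙ be distinct complex numbers of modulus 1 with pairwise distances |z_j − z_i| ≥ 4/D for some real D > 0. Then the n×n matrix whose (i,j) entry is ∑_{m=0}^{j−1} (z_i 2^{ℓ−1})^m has |determinant| ≥ (2^{ℓ+1}/D)^{n(n−1)/2}. -/
import Mathlib

open Finset Polynomial

lemma sum_card_Ioi (n : ℕ) : ∑ i : Fin n, #(Finset.Ioi i) = n * (n - 1) / 2 := by
  simp only [Fin.card_Ioi]
  rw [Fin.sum_univ_eq_sum_range, ← Finset.sum_range_reflect]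
  rw [← Finset.sum_range_id n]
  apply Finset.sum_congr rfl
  intro i hi
  rw [Finset.mem_range] at hi
  omega

/-- For unit complex numbers `z₁,...,zₙ` with pairwise distances at least `4/D`,
the matrix with entries `∑_{m=0}^{j−1} (zᵢ 2^{ℓ−1})^m` has
`|det| ≥ (2^{ℓ+1}/D)^{n(n−1)/2}`. -/
theorem det_geom_sum_matrix_lower_bound (n : ℕ) (hn : 1 ≤ n) (ℓ : ℕ) (hℓ : 3 ≤ ℓ)
    (D : ℝ) (hD : 0 < D) (z : Fin n → ℂ) (hz : ∀ i, ‖z i‖ = 1)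
    (hsep : ∀ i j, i ≠ j → 4 / D ≤ ‖z j - z i‖) :
    ((2 : ℝ) ^ (ℓ + 1) / D) ^ (n * (n - 1) / 2)
      ≤ ‖(Matrix.of fun i j : Fin n =>
            ∑ m ∈ Finset.range ((j : ℕ) + 1), (z i * 2 ^ (ℓ - 1)) ^ m).det‖ := by
  set w : Fin n → ℂ := fun i => z i * 2 ^ (ℓ - 1) with hw
  set p : Fin n → ℂ[X] := fun j => ∑ m ∈ Finset.range ((j : ℕ) + 1), X ^ m with hp
  have h_deg : ∀ j : Fin n, (p j).natDegree = j := by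
    intro j
    apply le_antisymm
    · apply Polynomial.natDegree_sum_le_of_forall_le
      intro m hm
      rw [Polynomial.natDegree_X_pow]
      exact Nat.lt_succ_iff.mp (Finset.mem_range.mp hm)
    · apply Polynomial.le_natDegree_of_ne_zero
      rw [Polynomial.finset_sum_coeff]
      simp only [Polynomial.coeff_X_pow]
      rw [Finset.sum_ite_eq (Finset.range ((j:ℕ)+1))]
      simp
  have h_monic : ∀ j : Fin n, (p j).Monic := by
    intro j
    have := Polynomial.monic_geom_sum_X (R := ℂ) (n := (j : ℕ) + 1) (by omega)
    simpa using this
  have hmat : (Matrix.of fun i j : Fin n =>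
        ∑ m ∈ Finset.range ((j : ℕ) + 1), (z i * 2 ^ (ℓ - 1)) ^ m)
      = Matrix.of fun i j => (p j).eval (w i) := by
    ext i j
    simp [hp, hw, Polynomial.eval_finset_sum]
  rw [hmat, ← Matrix.det_eval_matrixOfPolynomials_eq_det_vandermonde w p h_deg h_monic,
    Matrix.det_vandermonde]
  rw [norm_prod]
  have key : ∀ i : Fin n, ((2 : ℝ) ^ (ℓ + 1) / D) ^ #(Finset.Ioi i)
      ≤ ‖∏ j ∈ Finset.Ioi i, (w j - w i)‖ := by
    intro i
    rw [norm_prod, ← Finset.prod_const]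
    apply Finset.prod_le_prod
    · intro j _
      positivity
    · intro j hj
      rw [Finset.mem_Ioi] at hj
      have : w j - w i = (z j - z i) * 2 ^ (ℓ - 1) := by ring
      rw [this, norm_mul]
      have h2 : ‖(2 : ℂ) ^ (ℓ - 1)‖ = 2 ^ (ℓ - 1) := by
        simp [norm_pow]
      rw [h2]
      have hsep' := hsep i j (ne_of_lt hj)
      have hpow : (2 : ℝ) ^ (ℓ + 1) = 4 * 2 ^ (ℓ - 1) := by
        have : ℓ + 1 = (ℓ - 1) + 2 := by omega
        rw [this, pow_add]; ring
      rw [hpow]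
      calc 4 * 2 ^ (ℓ - 1) / D = (4 / D) * 2 ^ (ℓ - 1) := by ring
        _ ≤ ‖z j - z i‖ * 2 ^ (ℓ - 1) :=
            mul_le_mul_of_nonneg_right hsep' (by positivity)
  calc ((2 : ℝ) ^ (ℓ + 1) / D) ^ (n * (n - 1) / 2)
      = ∏ i : Fin n, ((2 : ℝ) ^ (ℓ + 1) / D) ^ #(Finset.Ioi i) := by
        rw [Finset.prod_pow_eq_pow_sum, sum_card_Ioi]
    _ ≤ ∏ i : Fin n, ‖∏ j ∈ Finset.Ioi i, (w j - w i)‖ := by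
        apply Finset.prod_le_prod
        · intro i _; positivity
        · intro i _; exact key i
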